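/- Let A ∈ ℝ^{m×N}. Then there exists a constant 𝒦(A) ≥ 1, depending only on A, such that for every N×N diagonal matrix D with strictly positive diagonal entries and all u, v ∈ ℝ^N satisfying P_{Null(A)} D (u + P_{Null(A)} v) = 0, it holds that ‖u + P_{Null(A)} v‖₂ ≤ 𝒦(A)‖u‖₂. -/

import Mathlib

noncomputable section

/-- The Euclidean (ℓ²) norm of a vector in ℝⁿ. -/
def norm2 {n : ℕ} (v : Fin n → ℝ) : ℝ := Real.sqrt (∑ i, v i ^ 2)

/-- The ℓ¹ norm of a vector in ℝⁿ. -/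
def norm1 {n : ℕ} (v : Fin n → ℝ) : ℝ := ∑ i, |v i|

/-- The sup (ℓ^∞) norm of a vector in ℝⁿ. -/
def normInf {n : ℕ} (v : Fin n → ℝ) : ℝ := ⨆ i, |v i|

/-- The ℓʳ (quasi-)norm ‖v‖_r = (∑ |v i|^r)^(1/r). -/
def normr {n : ℕ} (r : ℝ) (v : Fin n → ℝ) : ℝ := (∑ i, |v i| ^ r) ^ (1 / r)

/-- The smallest singular value of `A`, via `σ_min(A) = inf {‖Aᵀ z‖₂ : ‖z‖₂ = 1}`. -/
def sigmaMin {m N : ℕ} (A : Matrix (Fin m) (Fin N) ℝ) : ℝ :=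
  sInf {c : ℝ | ∃ z : Fin m → ℝ, norm2 z = 1 ∧ c = norm2 (A.transpose.mulVec z)}

/-- The entropy H(z) = −∑ |z i| ln |z i| (with the convention 0 · ln 0 = 0,
which holds automatically since `Real.log 0 = 0`). -/
def Hent {n : ℕ} (z : Fin n → ℝ) : ℝ := -∑ i, |z i| * Real.log |z i|

/-- The set 𝒰(A,y) of basis-pursuit minimizers: minimizers of ‖·‖₁ subject to Az = y. -/
def BPset {m N : ℕ} (A : Matrix (Fin m) (Fin N) ℝ) (y : Fin m → ℝ) : Set (Fin N → ℝ) :=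
  {z | A.mulVec z = y ∧ ∀ w : Fin N → ℝ, A.mulVec w = y → norm1 z ≤ norm1 w}

/-- The basis-pursuit minimum value R(A,y) = min {‖z‖₁ : Az = y}. -/
def Rmin {m N : ℕ} (A : Matrix (Fin m) (Fin N) ℝ) (y : Fin m → ℝ) : ℝ :=
  sInf (norm1 '' {z : Fin N → ℝ | A.mulVec z = y})

/-- The function h_p: h₂(t) = 2 sinh t, and for p > 2,
h_p(t) = (1−t)^{−p/(p−2)} − (1+t)^{−p/(p−2)}. -/
def hfun (p t : ℝ) : ℝ :=
  if p = 2 then 2 * Real.sinh t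
  else (1 - t) ^ (-(p / (p - 2))) - (1 + t) ^ (-(p / (p - 2)))

/-- The natural domain of h_p: all of ℝ when p = 2, and (−1,1) when p > 2. -/
def hDomain (p : ℝ) : Set ℝ := if p = 2 then Set.univ else Set.Ioo (-1) 1

/-- The inverse h_p^{-1} : ℝ → ℝ of h_p (h_p is a strictly increasing bijection
from its domain onto ℝ). -/
def hInv (p u : ℝ) : ℝ := Function.invFunOn (hfun p) (hDomain p) u

/-- q_p(u) = ∫₀ᵘ h_p^{−1}(v) dv. -/
def qfun (p u : ℝ) : ℝ := ∫ v in (0:ℝ)..u, hInv p v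

/-- Q_p(z) = α^p ∑ q_p(z i / α^p). -/
def Qfun {n : ℕ} (p α : ℝ) (z : Fin n → ℝ) : ℝ := α ^ p * ∑ i, qfun p (z i / α ^ p)

/-- g_p: g₂(u) = |u| ln(|u|/e) (with g₂(0) = 0), and for p > 2,
g_p(u) = |u| − (p/2)|u|^{2/p}. -/
def gfun (p u : ℝ) : ℝ :=
  if p = 2 then (if u = 0 then 0 else |u| * Real.log (|u| / Real.exp 1))
  else |u| - p / 2 * |u| ^ (2 / p)

/-- G_p(z) = α^p ∑ g_p(z i / α^p). -/
def Gfun {n : ℕ} (p α : ℝ) (z : Fin n → ℝ) : ℝ := α ^ p * ∑ i, gfun p (z i / α ^ p)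

/-- The predictor ψ_θ = θ₊^p − θ₋^p (componentwise powers), for a parameter vector
θ = (θ₊, θ₋) ∈ ℝ^{2N}. -/
def psiOf {N : ℕ} (p : ℝ) (θ : EuclideanSpace ℝ (Fin N ⊕ Fin N)) : Fin N → ℝ :=
  fun i => θ (Sum.inl i) ^ p - θ (Sum.inr i) ^ p

/-- The squared loss L(θ) = (1/2)‖A ψ_θ − y‖₂². -/
def lossFun {m N : ℕ} (A : Matrix (Fin m) (Fin N) ℝ) (y : Fin m → ℝ) (p : ℝ)
    (θ : EuclideanSpace ℝ (Fin N ⊕ Fin N)) : ℝ :=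
  (1 / 2) * ∑ j, (A.mulVec (psiOf p θ) j - y j) ^ 2

end

section StewartToddHelpers

open Finset Equiv
open scoped Matrix

lemma norm2_eq_norm {n : ℕ} (v : Fin n → ℝ) :
    norm2 v = ‖(WithLp.linearEquiv 2 ℝ (Fin n → ℝ)).symm v‖ := by
  rw [EuclideanSpace.norm_eq]
  simp [norm2, sq_abs]

lemma norm2_nonneg {n : ℕ} (v : Fin n → ℝ) : 0 ≤ norm2 v := Real.sqrt_nonneg _

lemma norm2_add_le {n : ℕ} (x y : Fin n → ℝ) : norm2 (x + y) ≤ norm2 x + norm2 y := by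
  simp only [norm2_eq_norm, map_add]; exact norm_add_le _ _

lemma norm2_smul {n : ℕ} (c : ℝ) (v : Fin n → ℝ) : norm2 (c • v) = |c| * norm2 v := by
  simp only [norm2_eq_norm, map_smul]; rw [norm_smul]; simp [Real.norm_eq_abs]

lemma norm2_neg {n : ℕ} (v : Fin n → ℝ) : norm2 (-v) = norm2 v := by
  simp only [norm2_eq_norm, map_neg, norm_neg]

lemma norm2_sum_le {n : ℕ} {ι : Type*} (s : Finset ι) (z : ι → (Fin n → ℝ)) :
    norm2 (∑ i ∈ s, z i) ≤ ∑ i ∈ s, norm2 (z i) := by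
  simp only [norm2_eq_norm, map_sum]; exact norm_sum_le _ _

lemma abs_le_norm2 {n : ℕ} (v : Fin n → ℝ) (i : Fin n) : |v i| ≤ norm2 v := by
  rw [← Real.sqrt_sq_eq_abs]
  exact Real.sqrt_le_sqrt (Finset.single_le_sum (fun j _ => sq_nonneg (v j)) (Finset.mem_univ i))

lemma norm2_le_sum_abs {n : ℕ} (v : Fin n → ℝ) : norm2 v ≤ ∑ i, |v i| := by
  rw [norm2]
  have h : ∑ i, v i ^ 2 ≤ (∑ i, |v i|) ^ 2 := by
    rw [sq (∑ i, |v i|), Finset.sum_mul]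
    refine Finset.sum_le_sum fun i _ => ?_
    rw [← sq_abs, sq]
    exact mul_le_mul_of_nonneg_left
      (Finset.single_le_sum (fun j _ => abs_nonneg (v j)) (Finset.mem_univ i)) (abs_nonneg _)
  calc Real.sqrt (∑ i, v i ^ 2) ≤ Real.sqrt ((∑ i, |v i|) ^ 2) := Real.sqrt_le_sqrt h
  _ = ∑ i, |v i| := Real.sqrt_sq (Finset.sum_nonneg fun i _ => abs_nonneg _)

lemma norm2_mulVec_le {n N : ℕ} (G : Matrix (Fin n) (Fin N) ℝ) (z : Fin N → ℝ) :
    norm2 (G.mulVec z) ≤ (∑ i, ∑ j, |G i j|) * norm2 z := by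
  calc norm2 (G.mulVec z) ≤ ∑ i, |G.mulVec z i| := norm2_le_sum_abs _
  _ ≤ ∑ i, (∑ j, |G i j|) * norm2 z := by
      refine Finset.sum_le_sum fun i _ => ?_
      calc |G.mulVec z i| ≤ ∑ j, |G i j * z j| := by
            rw [Matrix.mulVec]; exact Finset.abs_sum_le_sum_abs _ _
      _ ≤ ∑ j, |G i j| * norm2 z := by
          refine Finset.sum_le_sum fun j _ => ?_
          rw [abs_mul]
          exact mul_le_mul_of_nonneg_left (abs_le_norm2 z j) (abs_nonneg _)
      _ = (∑ j, |G i j|) * norm2 z := by rw [Finset.sum_mul]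
  _ = (∑ i, ∑ j, |G i j|) * norm2 z := by rw [Finset.sum_mul]

lemma detE (B C : Matrix (Fin N) (Fin k) ℝ) (d : Fin N → ℝ) :
    (B.transpose * (Matrix.diagonal d * C)).det
      = ∑ f : Fin k → Fin N, (∏ a, d (f a) * C (f a) a) * (B.submatrix f id).det := by
  have hDC : Matrix.diagonal d * C = Matrix.of fun i y => d i * C i y := by
    ext i y; rw [Matrix.diagonal_mul]; rfl
  rw [Matrix.det_apply']
  calc (∑ σ : Perm (Fin k), ((Equiv.Perm.sign σ : ℤ) : ℝ)
          * ∏ a, (B.transpose * (Matrix.diagonal d * C)) (σ a) a)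
      = ∑ σ : Perm (Fin k), ∑ f : Fin k → Fin N, ((Equiv.Perm.sign σ : ℤ) : ℝ)
          * ∏ a, B (f a) (σ a) * (d (f a) * C (f a) a) := by
        refine Finset.sum_congr rfl fun σ _ => ?_
        have h1 : (∏ a, (B.transpose * (Matrix.diagonal d * C)) (σ a) a)
            = ∏ a, ∑ i, B i (σ a) * (d i * C i a) := by
          refine Finset.prod_congr rfl fun a _ => ?_
          rw [hDC, Matrix.mul_apply]
          rfl
        rw [h1, Finset.prod_univ_sum, Fintype.piFinset_univ, Finset.mul_sum]
  _ = ∑ f : Fin k → Fin N, ∑ σ : Perm (Fin k), ((Equiv.Perm.sign σ : ℤ) : ℝ)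
          * ∏ a, B (f a) (σ a) * (d (f a) * C (f a) a) := Finset.sum_comm
  _ = ∑ f : Fin k → Fin N, (∏ a, d (f a) * C (f a) a) * (B.submatrix f id).det := by
        refine Finset.sum_congr rfl fun f _ => ?_
        rw [← Matrix.det_transpose (B.submatrix f id), Matrix.det_apply', Finset.mul_sum]
        refine Finset.sum_congr rfl fun σ _ => ?_
        rw [Finset.prod_mul_distrib]
        simp only [Matrix.transpose_apply, Matrix.submatrix_apply, id_eq]
        ring

lemma CB (B C : Matrix (Fin N) (Fin k) ℝ) (d : Fin N → ℝ) :
    (k.factorial : ℝ) * (B.transpose * (Matrix.diagonal d * C)).det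
      = ∑ f : Fin k → Fin N,
          (∏ a, d (f a)) * ((B.submatrix f id).det * (C.submatrix f id).det) := by
  have key : ∀ σ : Perm (Fin k),
      (∑ f : Fin k → Fin N, ((∏ a, d (f a)) * (B.submatrix f id).det)
        * (((Equiv.Perm.sign σ : ℤ) : ℝ) * ∏ a, C (f a) (σ a)))
      = (B.transpose * (Matrix.diagonal d * C)).det := by
    intro σ
    rw [detE B C d]
    have hbij : Function.Bijective (fun g : Fin k → Fin N => g ∘ σ.symm) := by
      constructor
      · intro a b h
        funext i
        have := congrFun h (σ i)
        simpa using this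
      · intro g
        exact ⟨g ∘ σ, by funext i; simp⟩
    refine Fintype.sum_bijective _ hbij _ _ fun g => ?_
    have h1 : (∏ a, d ((g ∘ σ.symm) a)) = ∏ a, d (g a) := Equiv.prod_comp σ.symm fun a => d (g a)
    have h2 : (B.submatrix (g ∘ σ.symm) id).det
        = ((Equiv.Perm.sign σ : ℤ) : ℝ) * (B.submatrix g id).det := by
      have he : B.submatrix (g ∘ σ.symm) id = (B.submatrix g id).submatrix σ.symm id := by
        ext a b; simp
      rw [he, Matrix.det_permute]
      norm_num [Equiv.Perm.sign_symm]
    have h3 : (∏ a, C ((g ∘ σ.symm) a) a) = ∏ a, C (g a) (σ a) := by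
      calc (∏ a, C (g (σ.symm a)) a)
          = ∏ a, C (g (σ.symm (σ a))) (σ a) := (Equiv.prod_comp σ fun a => C (g (σ.symm a)) a).symm
      _ = ∏ a, C (g a) (σ a) := by refine Finset.prod_congr rfl fun a _ => by rw [Equiv.symm_apply_apply]
    show ((∏ a, d (g a)) * (B.submatrix g id).det)
        * (((Equiv.Perm.sign σ : ℤ) : ℝ) * ∏ a, C (g a) (σ a))
      = (∏ a, d ((g ∘ σ.symm) a) * C ((g ∘ σ.symm) a) a) * (B.submatrix (g ∘ σ.symm) id).det
    rw [Finset.prod_mul_distrib, h1, h2, h3]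
    ring
  calc (k.factorial : ℝ) * (B.transpose * (Matrix.diagonal d * C)).det
      = ∑ _σ : Perm (Fin k), (B.transpose * (Matrix.diagonal d * C)).det := by
        rw [Finset.sum_const, Finset.card_univ, Fintype.card_perm, Fintype.card_fin,
          nsmul_eq_mul]
  _ = ∑ σ : Perm (Fin k), ∑ f : Fin k → Fin N, ((∏ a, d (f a)) * (B.submatrix f id).det)
        * (((Equiv.Perm.sign σ : ℤ) : ℝ) * ∏ a, C (f a) (σ a)) := by
        exact Finset.sum_congr rfl fun σ _ => (key σ).symm
  _ = ∑ f : Fin k → Fin N, ∑ σ : Perm (Fin k), ((∏ a, d (f a)) * (B.submatrix f id).det)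
        * (((Equiv.Perm.sign σ : ℤ) : ℝ) * ∏ a, C (f a) (σ a)) := Finset.sum_comm
  _ = ∑ f : Fin k → Fin N,
          (∏ a, d (f a)) * ((B.submatrix f id).det * (C.submatrix f id).det) := by
        refine Finset.sum_congr rfl fun f _ => ?_
        have hC : (∑ σ : Perm (Fin k), ((Equiv.Perm.sign σ : ℤ) : ℝ) * ∏ a, C (f a) (σ a))
            = (C.submatrix f id).det := by
          rw [← Matrix.det_transpose (C.submatrix f id), Matrix.det_apply']
          exact Finset.sum_congr rfl fun σ _ => by
            simp only [Matrix.transpose_apply, Matrix.submatrix_apply, id_eq]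
        rw [← Finset.mul_sum, hC, mul_assoc]

lemma updM_eq (B : Matrix (Fin N) (Fin k) ℝ) (d r' : Fin N → ℝ) (ℓ : Fin k) :
    (B.transpose * (Matrix.diagonal d * B)).updateCol ℓ
        (B.transpose.mulVec ((Matrix.diagonal d).mulVec r'))
      = B.transpose * (Matrix.diagonal d * (B.updateCol ℓ r')) := by
  ext x y
  by_cases h : y = ℓ
  · subst h
    simp [Matrix.updateCol_apply, Matrix.mul_apply, Matrix.mulVec, dotProduct,
      Matrix.diagonal_apply, Matrix.transpose_apply, Matrix.updateCol_self,
      ite_mul, mul_ite, mul_zero, zero_mul, Finset.sum_ite_eq, Finset.sum_ite_eq',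
      mul_assoc]
  · simp [Matrix.updateCol_apply, h, Matrix.mul_apply, Matrix.diagonal_mul,
      Matrix.transpose_apply]

lemma subUpd (B : Matrix (Fin N) (Fin k) ℝ) (r' : Fin N → ℝ) (ℓ : Fin k)
    (f : Fin k → Fin N) :
    (B.updateCol ℓ r').submatrix f id
      = (B.submatrix f id).updateCol ℓ (fun a => r' (f a)) := by
  ext a b
  simp [Matrix.updateCol_apply]

lemma smul_eq_cramer (Q : Matrix (Fin k) (Fin k) ℝ) (hdet : IsUnit Q.det)
    (s c : Fin k → ℝ) (h : Q.mulVec s = c) : Q.det • s = Matrix.cramer Q c := by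
  have h1 : Q.mulVec (Matrix.cramer Q c) = Q.det • c := Matrix.mulVec_cramer Q c
  have h2 : Q.mulVec (Q.det • s) = Q.det • c := by
    rw [Matrix.mulVec_smul, h]
  have h4 : Q⁻¹.mulVec (Q.mulVec (Q.det • s)) = Q⁻¹.mulVec (Q.mulVec (Matrix.cramer Q c)) :=
    congrArg _ (h2.trans h1.symm)
  rw [Matrix.mulVec_mulVec, Matrix.mulVec_mulVec, Matrix.nonsing_inv_mul Q hdet,
    Matrix.one_mulVec, Matrix.one_mulVec] at h4
  exact h4

lemma cramer_eq_inv (Q : Matrix (Fin k) (Fin k) ℝ) (hdet : IsUnit Q.det) (z : Fin k → ℝ) :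
    Matrix.cramer Q z = Q.det • (Q⁻¹.mulVec z) := by
  have h1 : Q.mulVec (Matrix.cramer Q z) = Q.det • z := Matrix.mulVec_cramer Q z
  have h4 : Q⁻¹.mulVec (Q.mulVec (Matrix.cramer Q z)) = Q⁻¹.mulVec (Q.det • z) :=
    congrArg _ h1
  rw [Matrix.mulVec_mulVec, Matrix.nonsing_inv_mul Q hdet, Matrix.one_mulVec,
    Matrix.mulVec_smul] at h4
  exact h4

lemma det_pos_M (B : Matrix (Fin N) (Fin k) ℝ) (hinj : ∀ s, B.mulVec s = 0 → s = 0)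
    (d : Fin N → ℝ) (hd : ∀ i, 0 < d i) :
    0 < (B.transpose * (Matrix.diagonal d * B)).det := by
  refine Matrix.PosDef.det_pos (Matrix.PosDef.of_dotProduct_mulVec_pos ?_ ?_)
  · show (B.transpose * (Matrix.diagonal d * B)).conjTranspose = _
    rw [Matrix.conjTranspose_eq_transpose_of_trivial, Matrix.transpose_mul,
      Matrix.transpose_mul, Matrix.transpose_transpose, Matrix.diagonal_transpose,
      Matrix.mul_assoc]
  · intro x hx
    have hBx : B.mulVec x ≠ 0 := fun h => hx (hinj x h)
    obtain ⟨i, hi⟩ := Function.ne_iff.mp hBx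
    have hM : (B.transpose * (Matrix.diagonal d * B)).mulVec x
        = B.transpose.mulVec ((Matrix.diagonal d).mulVec (B.mulVec x)) := by
      rw [Matrix.mulVec_mulVec, Matrix.mulVec_mulVec, Matrix.mul_assoc]
    rw [star_trivial, hM, Matrix.dotProduct_mulVec, ← Matrix.mulVec_transpose,
      Matrix.transpose_transpose]
    have hform : (B.mulVec x) ⬝ᵥ ((Matrix.diagonal d).mulVec (B.mulVec x))
        = ∑ j, d j * B.mulVec x j ^ 2 := by
      simp only [dotProduct, Matrix.mulVec_diagonal]
      exact Finset.sum_congr rfl fun j _ => by ring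
    rw [hform]
    refine Finset.sum_pos' (fun j _ => mul_nonneg (hd j).le (sq_nonneg _)) ⟨i, Finset.mem_univ i, ?_⟩
    have h1 := hd i
    have h2 : 0 < B.mulVec x i ^ 2 :=
      lt_of_le_of_ne (sq_nonneg _) (Ne.symm (pow_ne_zero 2 hi))
    exact mul_pos h1 h2

lemma core (N : ℕ) (V : Submodule ℝ (Fin N → ℝ)) : ∃ C : ℝ, 0 ≤ C ∧
    ∀ d : Fin N → ℝ, (∀ i, 0 < d i) → ∀ x r : Fin N → ℝ, x ∈ V →
      (∀ y ∈ V, dotProduct ((Matrix.diagonal d).mulVec (x + r)) y = 0) →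
      norm2 x ≤ C * norm2 r := by
  classical
  set k := Module.finrank ℝ V with hk
  let b : Module.Basis (Fin k) ℝ V := Module.finBasis ℝ V
  set B : Matrix (Fin N) (Fin k) ℝ := Matrix.of fun i a => ((b a : Fin N → ℝ)) i with hB
  -- basic facts about B
  have hBmem : ∀ s : Fin k → ℝ, B.mulVec s = ((∑ a, s a • b a : V) : Fin N → ℝ) := by
    intro s; funext i
    rw [Matrix.mulVec, dotProduct, Submodule.coe_sum, Finset.sum_apply]
    exact Finset.sum_congr rfl fun a _ => by
      simp [hB, mul_comm]
  have hmemV : ∀ s : Fin k → ℝ, B.mulVec s ∈ V := by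
    intro s; rw [hBmem]; exact (∑ a, s a • b a : V).2
  have hinj : ∀ s, B.mulVec s = 0 → s = 0 := by
    intro s hs
    rw [hBmem] at hs
    have h0 : (∑ a, s a • b a : V) = 0 := ZeroMemClass.coe_eq_zero.mp hs
    funext a
    exact Fintype.linearIndependent_iff.mp b.linearIndependent s h0 a
  have hrep : ∀ x : Fin N → ℝ, x ∈ V → ∃ s, B.mulVec s = x := by
    intro x hx
    refine ⟨b.repr ⟨x, hx⟩, ?_⟩
    rw [hBmem]
    exact_mod_cast congrArg _ (b.sum_repr ⟨x, hx⟩)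
  -- selection matrices and the finite family of comparison maps
  let Sel : (Fin k → Fin N) → Matrix (Fin k) (Fin N) ℝ :=
    fun f => Matrix.of fun a i => if f a = i then (1 : ℝ) else 0
  let G : (Fin k → Fin N) → Matrix (Fin N) (Fin N) ℝ :=
    fun f => B * ((B.submatrix f id)⁻¹ * Sel f)
  have hSel : ∀ f (z : Fin N → ℝ), (Sel f).mulVec z = fun a => z (f a) := by
    intro f z; funext a
    simp [Sel, Matrix.mulVec, dotProduct, ite_mul, one_mul, zero_mul,
      Finset.sum_ite_eq]
  set C0 : ℝ := ∑ f : Fin k → Fin N, ∑ i, ∑ j, |G f i j| with hC0def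
  have hC0 : 0 ≤ C0 := Finset.sum_nonneg fun f _ => Finset.sum_nonneg fun i _ =>
    Finset.sum_nonneg fun j _ => abs_nonneg _
  have hGle : ∀ f (z : Fin N → ℝ), norm2 ((G f).mulVec z) ≤ C0 * norm2 z := by
    intro f z
    refine le_trans (norm2_mulVec_le (G f) z) ?_
    refine mul_le_mul_of_nonneg_right ?_ (norm2_nonneg z)
    exact Finset.single_le_sum (f := fun f => ∑ i, ∑ j, |G f i j|)
      (fun f _ => Finset.sum_nonneg fun i _ => Finset.sum_nonneg fun j _ => abs_nonneg _)
      (Finset.mem_univ f)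
  refine ⟨C0, hC0, ?_⟩
  intro d hd x r hxV horth
  obtain ⟨s, hs⟩ := hrep x hxV
  set r' : Fin N → ℝ := -r with hr'
  set Dm := Matrix.diagonal d with hDm
  set M := B.transpose * (Dm * B) with hM
  have hdet : 0 < M.det := det_pos_M B hinj d hd
  -- the weighted normal equations
  have hBt : B.transpose.mulVec (Dm.mulVec (x + r)) = 0 := by
    funext a
    have hcol : (fun i => B i a) = B.mulVec (Pi.single a 1) := by
      funext i
      simp [Matrix.mulVec, dotProduct, Pi.single_apply, mul_ite, mul_one, mul_zero,
        Finset.sum_ite_eq']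
    have hmem : (fun i => B i a) ∈ V := hcol ▸ hmemV (Pi.single a 1)
    have := horth _ hmem
    rw [dotProduct] at this
    show (dotProduct (fun i => B.transpose a i) (Dm.mulVec (x + r))) = 0
    rw [dotProduct]
    rw [← this]
    exact Finset.sum_congr rfl fun i _ => by rw [Matrix.transpose_apply]; ring
  have hMs : M.mulVec s = B.transpose.mulVec (Dm.mulVec r') := by
    have h1 : B.transpose.mulVec (Dm.mulVec x) + B.transpose.mulVec (Dm.mulVec r) = 0 := by
      rw [← Matrix.mulVec_add, ← Matrix.mulVec_add]
      exact hBt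
    have h2 : B.transpose.mulVec (Dm.mulVec r') = - B.transpose.mulVec (Dm.mulVec r) := by
      rw [hr', Matrix.mulVec_neg, Matrix.mulVec_neg]
    have h3 : M.mulVec s = B.transpose.mulVec (Dm.mulVec x) := by
      rw [hM, ← Matrix.mulVec_mulVec, ← Matrix.mulVec_mulVec, hs]
    rw [h2, h3]
    exact eq_neg_of_add_eq_zero_left h1
  set c0 := B.transpose.mulVec (Dm.mulVec r') with hc0
  have hcs : M.det • s = Matrix.cramer M c0 :=
    smul_eq_cramer M (isUnit_iff_ne_zero.mpr hdet.ne') s c0 hMs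
  have hcram : ∀ ℓ, (k.factorial : ℝ) * Matrix.cramer M c0 ℓ
      = ∑ f : Fin k → Fin N, (∏ a, d (f a)) *
          ((B.submatrix f id).det * Matrix.cramer (B.submatrix f id) (fun a => r' (f a)) ℓ) := by
    intro ℓ
    rw [Matrix.cramer_apply, hc0, hM, hDm, updM_eq B d r' ℓ, CB B (B.updateCol ℓ r') d]
    refine Finset.sum_congr rfl fun f _ => ?_
    rw [subUpd, ← Matrix.cramer_apply]
  have hcoeff0 : ∀ f : Fin k → Fin N, (0:ℝ) ≤ (∏ a, d (f a)) * (B.submatrix f id).det ^ 2 :=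
    fun f => mul_nonneg (Finset.prod_nonneg fun a _ => (hd (f a)).le) (sq_nonneg _)
  have hvec : ((k.factorial : ℝ) * M.det) • x
      = ∑ f : Fin k → Fin N,
          ((∏ a, d (f a)) * (B.submatrix f id).det ^ 2) • (G f).mulVec r' := by
    have h1 : ((k.factorial : ℝ) * M.det) • x
        = B.mulVec ((k.factorial : ℝ) • (M.det • s)) := by
      rw [Matrix.mulVec_smul, Matrix.mulVec_smul, hs, smul_smul]
    rw [h1, hcs]
    have h2 : (k.factorial : ℝ) • Matrix.cramer M c0
        = ∑ f : Fin k → Fin N, ((∏ a, d (f a)) * (B.submatrix f id).det) •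
            (Matrix.cramer (B.submatrix f id) (fun a => r' (f a))) := by
      funext ℓ
      rw [Pi.smul_apply, smul_eq_mul, hcram ℓ, Finset.sum_apply]
      exact Finset.sum_congr rfl fun f _ => by rw [Pi.smul_apply, smul_eq_mul]; ring
    rw [h2]
    have h3 : B.mulVec (∑ f : Fin k → Fin N, ((∏ a, d (f a)) * (B.submatrix f id).det) •
        (Matrix.cramer (B.submatrix f id) (fun a => r' (f a))))
        = ∑ f : Fin k → Fin N, B.mulVec (((∏ a, d (f a)) * (B.submatrix f id).det) •
            (Matrix.cramer (B.submatrix f id) (fun a => r' (f a)))) := by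
      have := map_sum B.mulVecLin (fun f : Fin k → Fin N =>
        ((∏ a, d (f a)) * (B.submatrix f id).det) •
          (Matrix.cramer (B.submatrix f id) (fun a => r' (f a)))) Finset.univ
      simp only [Matrix.mulVecLin_apply] at this
      exact this
    rw [h3]
    refine Finset.sum_congr rfl fun f _ => ?_
    by_cases hf : (B.submatrix f id).det = 0
    · rw [hf]; simp
    · rw [cramer_eq_inv _ (isUnit_iff_ne_zero.mpr hf)]
      rw [Matrix.mulVec_smul, Matrix.mulVec_smul, smul_smul]
      have h4 : (G f).mulVec r'
          = B.mulVec ((B.submatrix f id)⁻¹.mulVec (fun a => r' (f a))) := by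
        show (B * ((B.submatrix f id)⁻¹ * Sel f)).mulVec r' = _
        rw [← Matrix.mulVec_mulVec, ← Matrix.mulVec_mulVec, hSel f r']
      rw [h4]
      have h5 : (∏ a, d (f a)) * (B.submatrix f id).det * (B.submatrix f id).det
          = (∏ a, d (f a)) * (B.submatrix f id).det ^ 2 := by ring
      rw [h5]
  have hsum : (∑ f : Fin k → Fin N, (∏ a, d (f a)) * (B.submatrix f id).det ^ 2)
      = (k.factorial : ℝ) * M.det := by
    rw [hM, hDm, CB B B d]
    exact Finset.sum_congr rfl fun f _ => by rw [sq]
  have hcpos : 0 < (k.factorial : ℝ) * M.det :=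
    mul_pos (Nat.cast_pos.mpr (Nat.factorial_pos k)) hdet
  have hcx : ((k.factorial : ℝ) * M.det) * norm2 x
      ≤ ((k.factorial : ℝ) * M.det) * (C0 * norm2 r') := by
    calc ((k.factorial : ℝ) * M.det) * norm2 x
        = norm2 (((k.factorial : ℝ) * M.det) • x) := by
          rw [norm2_smul, abs_of_pos hcpos]
    _ = norm2 (∑ f : Fin k → Fin N,
          ((∏ a, d (f a)) * (B.submatrix f id).det ^ 2) • (G f).mulVec r') := by rw [hvec]
    _ ≤ ∑ f : Fin k → Fin N,
          norm2 (((∏ a, d (f a)) * (B.submatrix f id).det ^ 2) • (G f).mulVec r') :=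
        norm2_sum_le _ _
    _ = ∑ f : Fin k → Fin N,
          ((∏ a, d (f a)) * (B.submatrix f id).det ^ 2) * norm2 ((G f).mulVec r') := by
        exact Finset.sum_congr rfl fun f _ => by rw [norm2_smul, abs_of_nonneg (hcoeff0 f)]
    _ ≤ ∑ f : Fin k → Fin N,
          ((∏ a, d (f a)) * (B.submatrix f id).det ^ 2) * (C0 * norm2 r') :=
        Finset.sum_le_sum fun f _ => mul_le_mul_of_nonneg_left (hGle f r') (hcoeff0 f)
    _ = (∑ f : Fin k → Fin N, (∏ a, d (f a)) * (B.submatrix f id).det ^ 2)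
          * (C0 * norm2 r') := (Finset.sum_mul _ _ _).symm
    _ = ((k.factorial : ℝ) * M.det) * (C0 * norm2 r') := by rw [hsum]
  have hxle : norm2 x ≤ C0 * norm2 r' := le_of_mul_le_mul_left hcx hcpos
  rw [hr', norm2_neg] at hxle
  exact hxle

end StewartToddHelpers

/-- Lemma `K_lemma`, with the Todd–Stewart constant: given A, with
P the orthogonal projection onto Null(A) (characterized by: range(P) ⊆ Null(A),
P fixes Null(A), and P is symmetric), there is a constant 𝒦(A) ≥ 1 such that for
every diagonal matrix D with strictly positive diagonal and all u, v with
P D (u + P v) = 0 one has ‖u + P v‖₂ ≤ 𝒦(A)‖u‖₂. -/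
theorem stmt9 (m N : ℕ) (A : Matrix (Fin m) (Fin N) ℝ)
    (P : Matrix (Fin N) (Fin N) ℝ)
    (hP1 : ∀ x : Fin N → ℝ, A.mulVec (P.mulVec x) = 0)
    (hP2 : ∀ x : Fin N → ℝ, A.mulVec x = 0 → P.mulVec x = x)
    (hP3 : P.transpose = P) :
    ∃ K : ℝ, 1 ≤ K ∧
      ∀ d : Fin N → ℝ, (∀ i, 0 < d i) →
      ∀ u v : Fin N → ℝ,
        P.mulVec ((Matrix.diagonal d).mulVec (u + P.mulVec v)) = 0 →
        norm2 (u + P.mulVec v) ≤ K * norm2 u := by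
  obtain ⟨C0, hC0, hcore⟩ := core N (LinearMap.ker (Matrix.mulVecLin A))
  refine ⟨C0 + 1, by linarith, ?_⟩
  intro d hd u v hyp
  set w : Fin N → ℝ := u + P.mulVec v with hw
  set x : Fin N → ℝ := P.mulVec w with hx
  set r : Fin N → ℝ := w - x with hrdef
  have hxr : x + r = w := by rw [hrdef]; abel
  have hxV : x ∈ LinearMap.ker A.mulVecLin :=
    LinearMap.mem_ker.mpr (by rw [Matrix.mulVecLin_apply, hx]; exact hP1 w)
  have horth : ∀ y ∈ LinearMap.ker A.mulVecLin,
      dotProduct ((Matrix.diagonal d).mulVec (x + r)) y = 0 := by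
    intro y hy
    have hAy : A.mulVec y = 0 := by
      have := LinearMap.mem_ker.mp hy; rwa [Matrix.mulVecLin_apply] at this
    have hPy : P.mulVec y = y := hP2 y hAy
    rw [hxr]
    calc dotProduct ((Matrix.diagonal d).mulVec w) y
        = dotProduct ((Matrix.diagonal d).mulVec w) (P.mulVec y) := by rw [hPy]
    _ = dotProduct (Matrix.vecMul ((Matrix.diagonal d).mulVec w) P) y :=
        Matrix.dotProduct_mulVec _ _ _
    _ = dotProduct (P.mulVec ((Matrix.diagonal d).mulVec w)) y := by
        rw [← Matrix.mulVec_transpose, hP3]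
    _ = 0 := by rw [hyp, zero_dotProduct]
  have h1 : norm2 x ≤ C0 * norm2 r := hcore d hd x r hxV horth
  set q : Fin N → ℝ := P.mulVec u with hq
  have hPq : P.mulVec q = q := hP2 q (hP1 u)
  have hru : r = u - q := by
    rw [hrdef, hx, hw]
    have hPw : P.mulVec (u + P.mulVec v) = q + P.mulVec v := by
      rw [Matrix.mulVec_add, hP2 (P.mulVec v) (hP1 v), hq]
    rw [hPw]
    abel
  have hqq : dotProduct q q = dotProduct q u := by
    calc dotProduct q q = dotProduct q (P.mulVec u) := by rw [← hq]
    _ = dotProduct (Matrix.vecMul q P) u := Matrix.dotProduct_mulVec _ _ _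
    _ = dotProduct q u := by rw [← Matrix.mulVec_transpose, hP3, hPq]
  have hsums : ∑ i, r i ^ 2 ≤ ∑ i, u i ^ 2 := by
    have e2 : (∑ i, q i * q i) = ∑ i, q i * u i := by
      simpa [dotProduct] using hqq
    have h3 : 0 ≤ ∑ i, q i * q i := Finset.sum_nonneg fun i _ => mul_self_nonneg _
    calc ∑ i, r i ^ 2 = ∑ i, (u i ^ 2 - 2 * (q i * u i) + q i * q i) :=
        Finset.sum_congr rfl fun i _ => by rw [hru]; simp only [Pi.sub_apply]; ring
    _ = (∑ i, u i ^ 2) - 2 * (∑ i, q i * u i) + ∑ i, q i * q i := by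
        rw [Finset.sum_add_distrib, Finset.sum_sub_distrib, Finset.mul_sum]
    _ ≤ ∑ i, u i ^ 2 := by rw [← e2]; linarith
  have h2 : norm2 r ≤ norm2 u := Real.sqrt_le_sqrt hsums
  have h4 : C0 * norm2 r ≤ C0 * norm2 u := mul_le_mul_of_nonneg_left h2 hC0
  calc norm2 w = norm2 (x + r) := by rw [hxr]
  _ ≤ norm2 x + norm2 r := norm2_add_le x r
  _ ≤ C0 * norm2 u + norm2 u := by linarith
  _ = (C0 + 1) * norm2 u := by ring
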